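/- Let F be a finite subset of R = ℂ[x_1,…,x_n] consisting of nonzero polynomials, let I = ⟨F⟩, and let 0 ≠ g ∈ R. Then the image under the dehomogenization map φ of the colon ideal ⟨{f^h : f ∈ F}⟩ : ⟨g^h⟩ in ℂ[x_1,…,x_n,h] equals the colon ideal I : ⟨g⟩ in R. -/

import Mathlib

open MvPolynomial

noncomputable section

/-- Homogenization: for `f` of total degree `d`,
`f^h = ∑_α (coeff α f) · x^α · h^{d - |α|}`, where `h` is the last variable. -/
def homog {n : ℕ} (f : MvPolynomial (Fin n) ℂ) : MvPolynomial (Fin (n + 1)) ℂ :=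
  ∑ α ∈ f.support,
    monomial (Finsupp.mapDomain Fin.castSucc α +
        Finsupp.single (Fin.last n) (f.totalDegree - α.sum fun _ e => e))
      (f.coeff α)

/-- Dehomogenization `φ : ℂ[x₁,…,xₙ,h] → ℂ[x₁,…,xₙ]`, fixing each `xᵢ` and sending
`h ↦ 1`. -/
def dehom {n : ℕ} : MvPolynomial (Fin (n + 1)) ℂ →ₐ[ℂ] MvPolynomial (Fin n) ℂ :=
  aeval (Fin.snoc X (1 : MvPolynomial (Fin n) ℂ))

namespace HomogAux

variable {n : ℕ}

/-- Extend an exponent vector by `0` in the last slot. -/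
def e (α : Fin n →₀ ℕ) : Fin (n + 1) →₀ ℕ := Finsupp.mapDomain Fin.castSucc α

/-- Restrict an exponent vector to the first `n` slots. -/
def r (m : Fin (n + 1) →₀ ℕ) : Fin n →₀ ℕ :=
  Finsupp.comapDomain Fin.castSucc m (Fin.castSucc_injective n).injOn

lemma degree_fin {k : ℕ} (m : Fin k →₀ ℕ) : m.degree = ∑ i, m i :=
  Finset.sum_subset (Finset.subset_univ _)
    (fun _ _ hi => Finsupp.notMem_support_iff.mp hi)

lemma r_apply (m : Fin (n + 1) →₀ ℕ) (i : Fin n) : r m i = m (Fin.castSucc i) := rfl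

lemma e_castSucc (α : Fin n →₀ ℕ) (i : Fin n) : e α (Fin.castSucc i) = α i :=
  Finsupp.mapDomain_apply (Fin.castSucc_injective n) _ _

lemma last_not_range : Fin.last n ∉ Set.range (Fin.castSucc : Fin n → Fin (n + 1)) := by
  rintro ⟨i, hi⟩
  exact absurd hi (Fin.castSucc_lt_last i).ne

lemma e_last (α : Fin n →₀ ℕ) : e α (Fin.last n) = 0 :=
  Finsupp.mapDomain_notin_range _ _ last_not_range

lemma r_e_add (α : Fin n →₀ ℕ) (k : ℕ) :
    r (e α + Finsupp.single (Fin.last n) k) = α := by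
  ext i
  rw [r_apply, Finsupp.add_apply, e_castSucc,
    Finsupp.single_eq_of_ne' (Fin.castSucc_lt_last i).ne', add_zero]

lemma degree_e_add (α : Fin n →₀ ℕ) (k : ℕ) :
    (e α + Finsupp.single (Fin.last n) k).degree = α.degree + k := by
  rw [degree_fin, degree_fin, Fin.sum_univ_castSucc]
  have hterm : ∀ i : Fin n,
      (e α + Finsupp.single (Fin.last n) k) (Fin.castSucc i) = α i := fun i => by
    rw [Finsupp.add_apply, e_castSucc,
      Finsupp.single_eq_of_ne' (Fin.castSucc_lt_last i).ne', add_zero]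
  rw [Finset.sum_congr rfl fun i _ => hterm i, Finsupp.add_apply, e_last,
    Finsupp.single_eq_same, zero_add]

lemma degree_r_add_last (m : Fin (n + 1) →₀ ℕ) :
    (r m).degree + m (Fin.last n) = m.degree := by
  rw [degree_fin, degree_fin, Fin.sum_univ_castSucc]
  simp [r_apply]

lemma recon {D : ℕ} (m : Fin (n + 1) →₀ ℕ) (hm : m.degree = D) :
    m = e (r m) + Finsupp.single (Fin.last n) (D - (r m).degree) := by
  have h1 := degree_r_add_last m
  have hlast : m (Fin.last n) = D - (r m).degree := by omega
  ext i
  refine Fin.lastCases ?_ (fun j => ?_) i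
  · rw [Finsupp.add_apply, e_last, Finsupp.single_eq_same, zero_add, hlast]
  · rw [Finsupp.add_apply, e_castSucc, Finsupp.single_eq_of_ne'
      (Fin.castSucc_lt_last j).ne', add_zero, r_apply]

lemma dehom_monomial (m : Fin (n + 1) →₀ ℕ) (c : ℂ) :
    dehom (monomial m c) = monomial (r m) c := by
  rw [dehom, aeval_monomial, monomial_eq, Finsupp.prod_pow, Finsupp.prod_pow,
    Fin.prod_univ_castSucc, Fin.snoc_last, one_pow, mul_one]
  simp only [Fin.snoc_castSucc, r_apply]
  rfl

lemma dehom_X_last : dehom (X (Fin.last n)) = (1 : MvPolynomial (Fin n) ℂ) := by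
  rw [dehom, aeval_X, Fin.snoc_last]

lemma dehom_eq_sum (P : MvPolynomial (Fin (n + 1)) ℂ) :
    dehom P = ∑ m ∈ P.support, monomial (r m) (P.coeff m) := by
  conv_lhs => rw [P.as_sum]
  rw [map_sum]
  exact Finset.sum_congr rfl fun m _ => dehom_monomial m _

lemma coeff_dehom {D : ℕ} {P : MvPolynomial (Fin (n + 1)) ℂ} (hP : P.IsHomogeneous D)
    (m : Fin (n + 1) →₀ ℕ) (hm : m.degree = D) :
    (dehom P).coeff (r m) = P.coeff m := by
  rw [dehom_eq_sum, coeff_sum]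
  simp_rw [coeff_monomial]
  rw [Finset.sum_eq_single m]
  · exact if_pos rfl
  · intro m' hm' hne
    rw [if_neg]
    intro h
    apply hne
    have hd' : m'.degree = D := by
      rw [Finsupp.degree_eq_weight_one]
      exact hP (mem_support_iff.mp hm')
    rw [recon m' hd', recon m hm, h]
  · intro h
    rw [if_pos rfl]
    exact notMem_support_iff.mp h

lemma dehom_inj {D : ℕ} {P Q : MvPolynomial (Fin (n + 1)) ℂ}
    (hP : P.IsHomogeneous D) (hQ : Q.IsHomogeneous D) (h : dehom P = dehom Q) :
    P = Q := by
  ext m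
  by_cases hm : m.degree = D
  · rw [← coeff_dehom hP m hm, ← coeff_dehom hQ m hm, h]
  · rw [hP.coeff_eq_zero hm, hQ.coeff_eq_zero hm]

lemma homog_eq (f : MvPolynomial (Fin n) ℂ) :
    homog f = ∑ α ∈ f.support,
      monomial (e α + Finsupp.single (Fin.last n) (f.totalDegree - α.degree))
        (f.coeff α) := rfl

lemma homog_isHomogeneous (f : MvPolynomial (Fin n) ℂ) :
    (homog f).IsHomogeneous f.totalDegree := by
  rw [homog_eq]
  refine IsHomogeneous.sum _ _ _ fun α hα => isHomogeneous_monomial _ ?_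
  rw [degree_e_add]
  have : α.degree ≤ f.totalDegree := le_totalDegree hα
  omega

lemma dehom_homog (f : MvPolynomial (Fin n) ℂ) : dehom (homog f) = f := by
  rw [homog_eq, map_sum]
  simp_rw [dehom_monomial, r_e_add]
  exact (as_sum f).symm

lemma homog_zero : homog (0 : MvPolynomial (Fin n) ℂ) = 0 := by
  rw [homog_eq]
  simp

lemma homog_mul (p q : MvPolynomial (Fin n) ℂ) :
    homog p * homog q =
      X (Fin.last n) ^ (p.totalDegree + q.totalDegree - (p * q).totalDegree)
        * homog (p * q) := by
  have hle := totalDegree_mul p q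
  refine dehom_inj (D := p.totalDegree + q.totalDegree)
    ((homog_isHomogeneous p).mul (homog_isHomogeneous q)) ?_ ?_
  · have h := (isHomogeneous_X_pow (Fin.last n)
        (p.totalDegree + q.totalDegree - (p * q).totalDegree)).mul
      (homog_isHomogeneous (p * q))
    rwa [Nat.sub_add_cancel hle] at h
  · rw [map_mul, map_mul, map_pow, dehom_homog, dehom_homog, dehom_homog,
      dehom_X_last, one_pow, one_mul]

lemma homog_add (p q : MvPolynomial (Fin n) ℂ) :
    ∃ a b c : ℕ,
      X (Fin.last n) ^ a * homog (p + q) =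
        X (Fin.last n) ^ b * homog p + X (Fin.last n) ^ c * homog q := by
  set D := max (max p.totalDegree q.totalDegree) (p + q).totalDegree with hD
  refine ⟨D - (p + q).totalDegree, D - p.totalDegree, D - q.totalDegree, ?_⟩
  have h1 : (p + q).totalDegree ≤ D := le_max_right _ _
  have h2 : p.totalDegree ≤ D := le_trans (le_max_left _ _) (le_max_left _ _)
  have h3 : q.totalDegree ≤ D := le_trans (le_max_right _ _) (le_max_left _ _)
  refine dehom_inj (D := D) ?_ ?_ ?_
  · have h := (isHomogeneous_X_pow (Fin.last n) (D - (p + q).totalDegree)).mul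
      (homog_isHomogeneous (p + q))
    rwa [Nat.sub_add_cancel h1] at h
  · refine IsHomogeneous.add ?_ ?_
    · have h := (isHomogeneous_X_pow (Fin.last n) (D - p.totalDegree)).mul
        (homog_isHomogeneous p)
      rwa [Nat.sub_add_cancel h2] at h
    · have h := (isHomogeneous_X_pow (Fin.last n) (D - q.totalDegree)).mul
        (homog_isHomogeneous q)
      rwa [Nat.sub_add_cancel h3] at h
  · simp only [map_add, map_mul, map_pow, dehom_X_last, dehom_homog, one_pow,
      one_mul]

lemma span_pow_homog (F : Set (MvPolynomial (Fin n) ℂ)) {p : MvPolynomial (Fin n) ℂ}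
    (hp : p ∈ Ideal.span F) :
    ∃ k, X (Fin.last n) ^ k * homog p ∈ Ideal.span (homog '' F) := by
  refine Submodule.span_induction ?_ ?_ ?_ ?_ hp
  · intro x hx
    exact ⟨0, by
      rw [pow_zero, one_mul]
      exact Ideal.subset_span (Set.mem_image_of_mem _ hx)⟩
  · exact ⟨0, by rw [homog_zero, mul_zero]; exact Ideal.zero_mem _⟩
  · rintro x y hxmem hymem ⟨k1, h1⟩ ⟨k2, h2⟩
    obtain ⟨a, b, c, habc⟩ := homog_add x y
    refine ⟨k1 + k2 + a, ?_⟩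
    have key : X (Fin.last n) ^ (k1 + k2 + a) * homog (x + y) =
        X (Fin.last n) ^ (k2 + b) * (X (Fin.last n) ^ k1 * homog x) +
          X (Fin.last n) ^ (k1 + c) * (X (Fin.last n) ^ k2 * homog y) := by
      calc X (Fin.last n) ^ (k1 + k2 + a) * homog (x + y)
          = X (Fin.last n) ^ (k1 + k2) * (X (Fin.last n) ^ a * homog (x + y)) := by
            rw [pow_add]; ring
        _ = X (Fin.last n) ^ (k1 + k2) *
              (X (Fin.last n) ^ b * homog x + X (Fin.last n) ^ c * homog y) := by
            rw [habc]
        _ = _ := by rw [pow_add, pow_add, pow_add]; ring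
    rw [key]
    exact Ideal.add_mem _ (Ideal.mul_mem_left _ _ h1) (Ideal.mul_mem_left _ _ h2)
  · rintro a x hxmem ⟨k, hk⟩
    refine ⟨a.totalDegree + x.totalDegree - (a * x).totalDegree + k, ?_⟩
    have key : X (Fin.last n) ^
          (a.totalDegree + x.totalDegree - (a * x).totalDegree + k) * homog (a * x) =
        homog a * (X (Fin.last n) ^ k * homog x) := by
      have hr : homog a * (X (Fin.last n) ^ k * homog x) =
          X (Fin.last n) ^ k * (homog a * homog x) := by ring
      rw [hr, homog_mul a x, pow_add]
      ring
    rw [smul_eq_mul, key]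
    exact Ideal.mul_mem_left _ _ hk

end HomogAux

open HomogAux

/-- For a finite set `F` of nonzero polynomials generating `I` and a
nonzero `g`, the image under dehomogenization of `⟨F^h⟩ : ⟨g^h⟩` equals `I : ⟨g⟩`. -/
theorem dehom_image_colon (n : ℕ) (F : Finset (MvPolynomial (Fin n) ℂ))
    (hF : ∀ f ∈ F, f ≠ 0) (I : Ideal (MvPolynomial (Fin n) ℂ))
    (hI : I = Ideal.span (F : Set (MvPolynomial (Fin n) ℂ)))
    (g : MvPolynomial (Fin n) ℂ) (hg : g ≠ 0) :
    dehom '' (Submodule.colon (Ideal.span (homog '' (F : Set (MvPolynomial (Fin n) ℂ))))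
        (Ideal.span {homog g}) : Set (MvPolynomial (Fin (n + 1)) ℂ)) =
      (Submodule.colon I (Ideal.span {g}) : Set (MvPolynomial (Fin n) ℂ)) := by
  ext q
  constructor
  · rintro ⟨P, hP, rfl⟩
    rw [SetLike.mem_coe] at hP ⊢
    rw [Ideal.mem_colon_span_singleton] at hP ⊢
    have h2 : dehom (P * homog g) ∈
        Ideal.map dehom (Ideal.span (homog '' (F : Set (MvPolynomial (Fin n) ℂ)))) :=
      Ideal.mem_map_of_mem _ hP
    rw [Ideal.map_span] at h2
    have himg : dehom '' (homog '' (F : Set (MvPolynomial (Fin n) ℂ))) =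
        (F : Set (MvPolynomial (Fin n) ℂ)) := by
      ext y
      constructor
      · rintro ⟨z, ⟨w, hw, rfl⟩, rfl⟩
        rw [dehom_homog]; exact hw
      · intro hy
        exact ⟨homog y, Set.mem_image_of_mem _ hy, dehom_homog y⟩
    rw [himg, map_mul, dehom_homog] at h2
    rw [hI]
    exact h2
  · intro hq
    rw [SetLike.mem_coe, Ideal.mem_colon_span_singleton] at hq
    rw [hI] at hq
    by_cases h0 : q * g = 0
    · have hq0 : q = 0 := by
        rcases mul_eq_zero.mp h0 with h | h
        · exact h
        · exact absurd h hg
      exact ⟨0, Submodule.zero_mem _, by rw [map_zero, hq0]⟩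
    · obtain ⟨k, hk⟩ := span_pow_homog _ hq
      refine ⟨X (Fin.last n) ^ k * homog q, ?_, ?_⟩
      · rw [SetLike.mem_coe, Ideal.mem_colon_span_singleton]
        have key : X (Fin.last n) ^ k * homog q * homog g =
            X (Fin.last n) ^ (q.totalDegree + g.totalDegree - (q * g).totalDegree) *
              (X (Fin.last n) ^ k * homog (q * g)) := by
          rw [mul_assoc, homog_mul q g]
          ring
        rw [key]
        exact Ideal.mul_mem_left _ _ hk
      · rw [map_mul, map_pow, dehom_X_last, dehom_homog, one_pow, one_mul]
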